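/- arXiv:2009.04510 — 2 statements merged into one kernel-verified Lean document; each statement's English description precedes it below -/
import Mathlib

section
/- For L = 2 and any n ≥ 2, the matrix M = (1/|e ∪ f|)_{e,f ∈ E}, indexed by the 2-element subsets of {1,…,n}, satisfies M = (1/12)·I + (1/4)·J + (1/12)·(A_3 + 2I), where A_3 is the 0/1 matrix with (A_3)_{e,f} = 1 if and only if |e ∪ f| = 3, I is the identity matrix and J the all-ones matrix; consequently M is positive semidefinite. -/
open Finset Matrix

/-- The edge set of the complete graph on `n` vertices (2-element subsets). -/
abbrev Edge2 (n : ℕ) := {e : Finset (Fin n) // e.card = 2}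

/-- The matrix `M = (1/|e ∪ f|)_{e,f ∈ E}`. -/
noncomputable def Mmat (n : ℕ) : Matrix (Edge2 n) (Edge2 n) ℝ :=
  Matrix.of fun e f => ((e.1 ∪ f.1).card : ℝ)⁻¹

/-- The 0/1 matrix `A_3` with `(A_3)_{e,f} = 1` iff `|e ∪ f| = 3`. -/
def A3mat (n : ℕ) : Matrix (Edge2 n) (Edge2 n) ℝ :=
  Matrix.of fun e f => if (e.1 ∪ f.1).card = 3 then (1 : ℝ) else 0

lemma psd_smul {m : Type*} [Fintype m] {A : Matrix m m ℝ} (hA : A.PosSemidef)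
    {c : ℝ} (hc : 0 ≤ c) : (c • A).PosSemidef := by
  rw [Matrix.posSemidef_iff_dotProduct_mulVec] at hA ⊢
  refine ⟨?_, fun x => ?_⟩
  · unfold Matrix.IsHermitian
    rw [Matrix.conjTranspose_smul, hA.1]
    simp
  · rw [Matrix.smul_mulVec, dotProduct_smul]
    have := hA.2 x
    simp only [star_trivial] at this ⊢
    positivity

lemma psd_J {m : Type*} [Fintype m] :
    (Matrix.of (fun _ _ : m => (1 : ℝ))).PosSemidef := by
  rw [Matrix.posSemidef_iff_dotProduct_mulVec]
  refine ⟨?_, fun x => ?_⟩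
  · ext i j; simp [Matrix.conjTranspose_apply]
  · have : star x ⬝ᵥ (Matrix.of (fun _ _ : m => (1 : ℝ))).mulVec x
        = (∑ i, x i) * (∑ i, x i) := by
      simp [Matrix.mulVec, dotProduct, Finset.sum_mul, mul_comm]
    rw [this]
    exact mul_self_nonneg _

/-- `A3 + 2I` is the Gram matrix of incidence vectors. -/
lemma gram_eq (n : ℕ) :
    A3mat n + (2 : ℝ) • (1 : Matrix (Edge2 n) (Edge2 n) ℝ)
      = (Matrix.of (fun v e => if v ∈ e.1 then (1:ℝ) else 0) :
          Matrix (Fin n) (Edge2 n) ℝ)ᴴ *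
        (Matrix.of (fun v e => if v ∈ e.1 then (1:ℝ) else 0)) := by
  refine Matrix.ext fun e f => ?_
  have hk : ∀ v : Fin n, (if v ∈ e.1 then (1:ℝ) else 0) * (if v ∈ f.1 then (1:ℝ) else 0)
      = if v ∈ e.1 ∩ f.1 then (1:ℝ) else 0 := by
    intro v
    by_cases h1 : v ∈ e.1 <;> by_cases h2 : v ∈ f.1 <;> simp [h1, h2]
  have hsum : ∑ v : Fin n, (if v ∈ e.1 ∩ f.1 then (1:ℝ) else 0)
      = ((e.1 ∩ f.1).card : ℝ) := by
    rw [Finset.sum_ite_mem, Finset.univ_inter, Finset.sum_const, nsmul_eq_mul, mul_one]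
  have hcards : (e.1 ∪ f.1).card + (e.1 ∩ f.1).card = 4 := by
    rw [Finset.card_union_add_card_inter, e.2, f.2]
  have hle : (e.1 ∩ f.1).card ≤ 2 := by
    have h := Finset.card_le_card (Finset.inter_subset_left : e.1 ∩ f.1 ⊆ e.1)
    have := e.2; omega
  have heq : e = f ↔ (e.1 ∩ f.1).card = 2 := by
    constructor
    · rintro rfl; simpa using e.2
    · intro h
      have : e.1 ∩ f.1 = e.1 := Finset.eq_of_subset_of_card_le Finset.inter_subset_left
        (by rw [h, e.2])
      have h2 : e.1 ∩ f.1 = f.1 := Finset.eq_of_subset_of_card_le Finset.inter_subset_right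
        (by rw [h, f.2])
      exact Subtype.ext (this.symm.trans h2)
  erw [Matrix.mul_apply]
  simp only [Matrix.add_apply, Matrix.smul_apply, Matrix.one_apply, A3mat, Matrix.of_apply,
    Matrix.mul_apply, Matrix.conjTranspose_apply, star_trivial, hk, hsum]
  interval_cases h : (e.1 ∩ f.1).card
  · have h3 : (e.1 ∪ f.1).card = 4 := by omega
    have hef : ¬ e = f := by rw [heq]; omega
    simp [h3, hef]
  · have h3 : (e.1 ∪ f.1).card = 3 := by omega
    have hef : ¬ e = f := by rw [heq]; omega
    simp [h3, hef]
  · have h3 : (e.1 ∪ f.1).card = 2 := by omega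
    have hef : e = f := heq.2 rfl
    simp [h3, hef, f.2]

/-- For `L = 2`: `M = (1/12)·I + (1/4)·J + (1/12)·(A_3 + 2I)`; consequently `M ⪰ 0`. -/
theorem stmt8 (n : ℕ) (hn : 2 ≤ n) :
    Mmat n =
        (1/12 : ℝ) • (1 : Matrix (Edge2 n) (Edge2 n) ℝ)
      + (1/4 : ℝ) • Matrix.of (fun _ _ : Edge2 n => (1 : ℝ))
      + (1/12 : ℝ) • (A3mat n + (2 : ℝ) • (1 : Matrix (Edge2 n) (Edge2 n) ℝ))
    ∧ (Mmat n).PosSemidef := by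
  have hM : Mmat n =
        (1/12 : ℝ) • (1 : Matrix (Edge2 n) (Edge2 n) ℝ)
      + (1/4 : ℝ) • Matrix.of (fun _ _ : Edge2 n => (1 : ℝ))
      + (1/12 : ℝ) • (A3mat n + (2 : ℝ) • (1 : Matrix (Edge2 n) (Edge2 n) ℝ)) := by
    ext e f
    have h2 : 2 ≤ (e.1 ∪ f.1).card := by
      have := Finset.card_le_card (Finset.subset_union_left : e.1 ⊆ e.1 ∪ f.1)
      omega
    have h4 : (e.1 ∪ f.1).card ≤ 4 := by
      have := Finset.card_union_le e.1 f.1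
      rw [e.2, f.2] at this; omega
    have heq : e = f ↔ (e.1 ∪ f.1).card = 2 := by
      constructor
      · rintro rfl; simpa using e.2
      · intro h
        have he : e.1 ∪ f.1 = e.1 := (Finset.eq_of_subset_of_card_le
          Finset.subset_union_left (by rw [h, e.2])).symm
        have hf : e.1 ∪ f.1 = f.1 := (Finset.eq_of_subset_of_card_le
          Finset.subset_union_right (by rw [h, f.2])).symm
        exact Subtype.ext (he ▸ hf)
    simp only [Mmat, A3mat, Matrix.add_apply, Matrix.smul_apply, Matrix.one_apply,
      Matrix.of_apply, smul_eq_mul]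
    interval_cases h : (e.1 ∪ f.1).card
    · have hef : e = f := heq.2 rfl
      simp only [hef, if_true]; norm_num
    · have hef : ¬ e = f := by rw [heq]; omega
      simp only [hef, if_false]; norm_num
    · have hef : ¬ e = f := by rw [heq]; omega
      simp only [hef, if_false]; norm_num
  refine ⟨hM, ?_⟩
  rw [hM]
  refine ((psd_smul Matrix.PosSemidef.one (by norm_num)).add
    (psd_smul psd_J (by norm_num))).add (psd_smul ?_ (by norm_num))
  rw [gram_eq]
  exact Matrix.posSemidef_conjTranspose_mul_self _
end

section
/- For all integers n ≥ 1, L ≥ 2 and 1 ≤ p ≤ n, the matrix M_p is positive semidefinite, where, for a set U of cardinality n − p and F = {e ⊆ U : |e| ≤ L}, M_p is the F×F matrix with entries (M_p)_{e,f} = 1/(p + |e ∪ f|). -/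
open Finset


lemma binom {ι : Type*} [DecidableEq ι] (A : Finset ι) (a b : ℝ) :
    ∑ S ∈ A.powerset, a ^ (A.card - S.card) * b ^ S.card = (a + b) ^ A.card := by
  have h := Finset.prod_add (fun _ : ι => b) (fun _ : ι => a) A
  simp only [Finset.prod_const] at h
  rw [add_comm a b, h]
  apply Finset.sum_congr rfl
  intro S hS
  rw [Finset.mem_powerset] at hS
  rw [Finset.card_sdiff_of_subset hS]
  ring

lemma inner_sum' (np : ℕ) (e f : Finset (Fin np)) (t : ℝ) :
    ∑ S ∈ (e ∩ f).powerset,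
      (t * (1 - t)) ^ S.card * (t ^ (e.card - S.card) * t ^ (f.card - S.card))
      = t ^ (e ∪ f).card := by
  set A := e ∩ f with hA
  have hAe : A.card ≤ e.card := Finset.card_le_card (Finset.inter_subset_left)
  have hAf : A.card ≤ f.card := Finset.card_le_card (Finset.inter_subset_right)
  have key : ∀ S ∈ A.powerset,
      (t * (1 - t)) ^ S.card * (t ^ (e.card - S.card) * t ^ (f.card - S.card))
      = t ^ (e.card - A.card) * t ^ (f.card - A.card) *
        ((t * t) ^ (A.card - S.card) * (t * (1 - t)) ^ S.card) := by
    intro S hS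
    rw [Finset.mem_powerset] at hS
    have hSA : S.card ≤ A.card := Finset.card_le_card hS
    have h1 : e.card - S.card = (e.card - A.card) + (A.card - S.card) := by omega
    have h2 : f.card - S.card = (f.card - A.card) + (A.card - S.card) := by omega
    rw [h1, h2, pow_add, pow_add]
    ring
  rw [Finset.sum_congr rfl key, ← Finset.mul_sum, binom]
  have ht : t * t + t * (1 - t) = t := by ring
  rw [ht, ← pow_add, ← pow_add]
  congr 1
  have h3 := Finset.card_union_add_card_inter e f
  rw [← hA] at h3
  omega


/-- For a ground set `U` of cardinality `n − p`, the index set `F = {e ⊆ U : |e| ≤ L}`,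
realized as subsets of `Fin (n − p)` of cardinality at most `L`. -/
abbrev SmallSub (np L : ℕ) := {e : Finset (Fin np) // e.card ≤ L}


lemma quad (np L : ℕ) (x : SmallSub np L → ℝ) (t : ℝ) :
    ∑ S : Finset (Fin np), (t*(1-t))^S.card *
        (∑ e : SmallSub np L, if S ⊆ e.1 then x e * t ^ (e.1.card - S.card) else 0)^2
    = ∑ e : SmallSub np L, ∑ f : SmallSub np L, x e * x f * t ^ (e.1 ∪ f.1).card := by
  have step1 : ∀ S : Finset (Fin np), (t*(1-t))^S.card *
      (∑ e : SmallSub np L, if S ⊆ e.1 then x e * t ^ (e.1.card - S.card) else 0)^2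
      = ∑ e : SmallSub np L, ∑ f : SmallSub np L,
        if S ⊆ e.1 ∧ S ⊆ f.1 then
          x e * x f * ((t*(1-t))^S.card * (t^(e.1.card - S.card) * t^(f.1.card - S.card)))
        else 0 := by
    intro S
    rw [pow_two, Finset.sum_mul_sum, Finset.mul_sum]
    refine Finset.sum_congr rfl fun e _ => ?_
    rw [Finset.mul_sum]
    refine Finset.sum_congr rfl fun f _ => ?_
    split_ifs <;> simp_all <;> ring
  rw [Finset.sum_congr rfl (fun S _ => step1 S), Finset.sum_comm]
  refine Finset.sum_congr rfl fun e _ => ?_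
  rw [Finset.sum_comm]
  refine Finset.sum_congr rfl fun f _ => ?_
  rw [← inner_sum' np e.1 f.1 t, Finset.mul_sum]
  have h := Finset.sum_ite_mem Finset.univ (e.1 ∩ f.1).powerset
    (fun S => x e * x f * ((t*(1-t))^S.card * (t^(e.1.card - S.card) * t^(f.1.card - S.card))))
  rw [Finset.univ_inter] at h
  rw [← h]
  refine Finset.sum_congr rfl fun S _ => ?_
  refine if_congr ?_ (by ring) rfl
  exact (Finset.mem_powerset.trans Finset.subset_inter_iff).symm


/-- The matrix `M_p = (1/(p + |e ∪ f|))_{e,f ∈ F}`. -/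
noncomputable def Mpmat (np L p : ℕ) : Matrix (SmallSub np L) (SmallSub np L) ℝ :=
  Matrix.of fun e f => (((p + (e.1 ∪ f.1).card : ℕ)) : ℝ)⁻¹


theorem stmt12' (np L p : ℕ) (hp1 : 1 ≤ p) :
    (Mpmat np L p).PosSemidef := by
  rw [Matrix.posSemidef_iff_dotProduct_mulVec]
  constructor
  · ext e f
    simp [Mpmat, Matrix.conjTranspose_apply, Finset.union_comm]
  · intro x
    have hinv : ∀ c : ℕ, ((p + c : ℕ) : ℝ)⁻¹ = ∫ t in (0:ℝ)..1, t ^ (p - 1 + c) := by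
      intro c
      rw [integral_pow, one_pow, zero_pow (by omega), sub_zero]
      have hc : (p - 1 + c) + 1 = p + c := by omega
      rw [one_div]
      congr 1
      push_cast [← hc]
      ring
    have hrw : dotProduct (star x) ((Mpmat np L p).mulVec x)
        = ∑ e : SmallSub np L, ∑ f : SmallSub np L,
            ∫ t in (0:ℝ)..1, x e * x f * t ^ (p - 1 + (e.1 ∪ f.1).card) := by
      simp only [dotProduct, Matrix.mulVec, Mpmat, Matrix.of_apply, star_trivial]
      refine Finset.sum_congr rfl fun e _ => ?_
      rw [Finset.mul_sum]
      refine Finset.sum_congr rfl fun f _ => ?_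
      rw [hinv, ← intervalIntegral.integral_mul_const, ← intervalIntegral.integral_const_mul]
      refine intervalIntegral.integral_congr fun t _ => ?_
      ring
    rw [hrw]
    have hint : ∀ (e f : SmallSub np L), IntervalIntegrable
        (fun t : ℝ => x e * x f * t ^ (p - 1 + (e.1 ∪ f.1).card))
        MeasureTheory.volume 0 1 :=
      fun e f => (continuous_const.mul (continuous_pow _)).intervalIntegrable 0 1
    have hswap : ∑ e : SmallSub np L, ∑ f : SmallSub np L,
        (∫ t in (0:ℝ)..1, x e * x f * t ^ (p - 1 + (e.1 ∪ f.1).card))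
        = ∫ t in (0:ℝ)..1, ∑ e : SmallSub np L, ∑ f : SmallSub np L,
            x e * x f * t ^ (p - 1 + (e.1 ∪ f.1).card) := by
      rw [intervalIntegral.integral_finset_sum (f := fun e t => ∑ f : SmallSub np L,
          x e * x f * t ^ (p - 1 + (e.1 ∪ f.1).card)) (fun e _ =>
        (continuous_finset_sum _ fun f _ =>
          continuous_const.mul (continuous_pow _)).intervalIntegrable 0 1)]
      exact Finset.sum_congr rfl fun e _ =>
        (intervalIntegral.integral_finset_sum (fun f _ => hint e f)).symm
    rw [hswap]
    refine intervalIntegral.integral_nonneg zero_le_one fun u hu => ?_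
    have hq : ∑ e : SmallSub np L, ∑ f : SmallSub np L,
        x e * x f * u ^ (p - 1 + (e.1 ∪ f.1).card)
        = u ^ (p - 1) * ∑ e : SmallSub np L, ∑ f : SmallSub np L,
            x e * x f * u ^ (e.1 ∪ f.1).card := by
      rw [Finset.mul_sum]
      refine Finset.sum_congr rfl fun e _ => ?_
      rw [Finset.mul_sum]
      refine Finset.sum_congr rfl fun f _ => ?_
      rw [pow_add]
      ring
    rw [hq, ← quad np L x u]
    refine mul_nonneg (pow_nonneg hu.1 _) (Finset.sum_nonneg fun S _ => ?_)
    refine mul_nonneg (pow_nonneg (mul_nonneg hu.1 (by linarith [hu.2])) _) (sq_nonneg _)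

/-- For all `n ≥ 1`, `L ≥ 2` and `1 ≤ p ≤ n`, the matrix `M_p` is positive semidefinite. -/
theorem stmt12 (n L p : ℕ) (hn : 1 ≤ n) (hL : 2 ≤ L) (hp1 : 1 ≤ p) (hpn : p ≤ n) :
    (Mpmat (n - p) L p).PosSemidef :=
  stmt12' (n - p) L p hp1
end
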